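/- Let Y_1, ..., Y_s be i.i.d. random variables where each Y_i is obtained by first sampling W from the truncated Poisson distribution P(W = w) = z^w/(w! f_{k+1}(z)) on {k+1, k+2, ...} and then sampling Y_i ~ Binomial(W, p). Then for every nonnegative integer D, P(Y_1 + ⋯ + Y_s = D) ≤ e^{(1−p)zs} (pzs)^D / (f_{k+1}(z)^s D!). -/

import Mathlib

/-- `ftail ℓ z = ∑_{j ≥ ℓ} z^j / j!`, the tail of the exponential series. -/
noncomputable def ftail (ℓ : ℕ) (z : ℝ) : ℝ := ∑' j : ℕ, z ^ (j + ℓ) / (Nat.factorial (j + ℓ))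

/-- The truncated Poisson mass function on `{k+1, k+2, …}`. -/
noncomputable def truncPoisson (k : ℕ) (z : ℝ) (j : ℕ) : ℝ :=
  if k + 1 ≤ j then z ^ j / (Nat.factorial j * ftail (k + 1) z) else 0

/-- The mass function of `Y`, where `W` is truncated Poisson and `Y | W = w ~ Bin(w, p)`. -/
noncomputable def mixedBin (k : ℕ) (z p : ℝ) (d : ℕ) : ℝ :=
  ∑' w : ℕ, truncPoisson k z w * (w.choose d * p ^ d * (1 - p) ^ (w - d))

lemma exp_tsum' (x : ℝ) : ∑' n : ℕ, x ^ n / (Nat.factorial n) = Real.exp x := by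
  rw [Real.exp_eq_exp_ℝ, NormedSpace.exp_eq_tsum_div]

lemma ftail_summable (ℓ : ℕ) (z : ℝ) :
    Summable (fun j : ℕ => z ^ (j + ℓ) / (Nat.factorial (j + ℓ))) :=
  (summable_nat_add_iff ℓ).mpr (Real.summable_pow_div_factorial z)

lemma ftail_pos (ℓ : ℕ) {z : ℝ} (hz : 0 < z) : 0 < ftail ℓ z := by
  refine Summable.tsum_pos (ftail_summable ℓ z) (fun j => by positivity) 0 (by positivity)

lemma truncPoisson_nonneg (k : ℕ) {z : ℝ} (hz : 0 < z) (j : ℕ) : 0 ≤ truncPoisson k z j := by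
  unfold truncPoisson
  split_ifs
  · have := ftail_pos (k + 1) hz
    positivity
  · exact le_refl 0

lemma mixedBin_nonneg (k : ℕ) {z p : ℝ} (hz : 0 < z) (hp : 0 < p) (hp1 : p < 1) (d : ℕ) :
    0 ≤ mixedBin k z p d := by
  have h1p : (0:ℝ) ≤ 1 - p := by linarith
  refine tsum_nonneg fun w => mul_nonneg (truncPoisson_nonneg k hz w) ?_
  exact mul_nonneg (mul_nonneg (Nat.cast_nonneg _) (by positivity)) (pow_nonneg h1p _)

lemma mixedBin_le (k : ℕ) {z p : ℝ} (hz : 0 < z) (hp : 0 < p) (hp1 : p < 1) (d : ℕ) :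
    mixedBin k z p d ≤
      Real.exp ((1 - p) * z) * (p * z) ^ d / (ftail (k + 1) z * Nat.factorial d) := by
  have hFpos : 0 < ftail (k + 1) z := ftail_pos _ hz
  set F := ftail (k + 1) z with hF
  have hy : 0 < (1 - p) * z := by nlinarith
  set y := (1 - p) * z with hy'
  set g : ℕ → ℝ := fun w =>
    (p * z) ^ d / (Nat.factorial d * F) *
      (if d ≤ w then y ^ (w - d) / (Nat.factorial (w - d)) else 0) with hg
  have hite_shift : (fun n : ℕ => (if d ≤ n + d then y ^ (n + d - d) / (Nat.factorial (n + d - d)) else 0))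
      = fun n : ℕ => y ^ n / (Nat.factorial n) := by
    funext n; simp
  have hite_sum : Summable (fun w : ℕ => if d ≤ w then y ^ (w - d) / (Nat.factorial (w - d)) else 0) := by
    apply (summable_nat_add_iff d).mp
    rw [hite_shift]
    exact Real.summable_pow_div_factorial y
  have hgsum : Summable g := hite_sum.mul_left _
  have hg_nonneg : ∀ w, 0 ≤ g w := by
    intro w
    apply mul_nonneg (by positivity)
    split_ifs
    · positivity
    · exact le_refl 0
  have hterm : ∀ w : ℕ,
      truncPoisson k z w * (↑(w.choose d) * p ^ d * (1 - p) ^ (w - d)) ≤ g w := by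
    intro w
    unfold truncPoisson
    split_ifs with h1
    · rcases le_or_gt d w with h2 | h2
      · -- equality case
        rw [hg]
        simp only [if_pos h2, ← hF]
        rw [Nat.cast_choose ℝ h2]
        have hmul : y ^ (w - d) = (1 - p) ^ (w - d) * z ^ (w - d) := by rw [hy', mul_pow]
        have hzw : z ^ w = z ^ d * z ^ (w - d) := by
          rw [← pow_add, Nat.add_sub_cancel' h2]
        have hd0 : (Nat.factorial d : ℝ) ≠ 0 := by positivity
        have hwd0 : (Nat.factorial (w - d) : ℝ) ≠ 0 := by positivity
        have hw0 : (Nat.factorial w : ℝ) ≠ 0 := by positivity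
        have hF0 : F ≠ 0 := ne_of_gt hFpos
        apply le_of_eq
        rw [hzw, hmul]
        field_simp
        ring
      · rw [Nat.choose_eq_zero_of_lt h2]
        simpa using hg_nonneg w
    · simpa using hg_nonneg w
  have hterm_nonneg : ∀ w : ℕ,
      0 ≤ truncPoisson k z w * (↑(w.choose d) * p ^ d * (1 - p) ^ (w - d)) := by
    intro w
    have h1p : (0:ℝ) ≤ 1 - p := by linarith
    exact mul_nonneg (truncPoisson_nonneg k hz w)
      (mul_nonneg (mul_nonneg (Nat.cast_nonneg _) (by positivity)) (pow_nonneg h1p _))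
  have hsum1 : Summable (fun w : ℕ =>
      truncPoisson k z w * (↑(w.choose d) * p ^ d * (1 - p) ^ (w - d))) :=
    Summable.of_nonneg_of_le hterm_nonneg hterm hgsum
  have h1 : mixedBin k z p d ≤ ∑' w, g w := Summable.tsum_le_tsum hterm hsum1 hgsum
  have h2 : ∑' w, g w = (p * z) ^ d / (Nat.factorial d * F) * Real.exp y := by
    rw [hg, tsum_mul_left]
    congr 1
    have := Summable.sum_add_tsum_nat_add (f := fun w : ℕ => if d ≤ w then y ^ (w - d) / (Nat.factorial (w - d)) else 0) d hite_sum
    rw [← this]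
    have hz0 : ∑ i ∈ Finset.range d, (if d ≤ i then y ^ (i - d) / (Nat.factorial (i - d)) else 0) = 0 := by
      apply Finset.sum_eq_zero
      intro i hi
      rw [if_neg]
      exact Nat.not_le.mpr (Finset.mem_range.mp hi)
    rw [hz0, zero_add, hite_shift, exp_tsum']
  rw [h2] at h1
  apply h1.trans
  apply le_of_eq
  have hd0 : (Nat.factorial d : ℝ) ≠ 0 := by positivity
  have hF0 : F ≠ 0 := ne_of_gt hFpos
  field_simp

lemma multi_sum (s D : ℕ) (x : ℝ) :
    ∑ d ∈ Finset.Nat.antidiagonalTuple s D, ∏ i, x ^ (d i) / (Nat.factorial (d i))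
      = ((s : ℝ) * x) ^ D / Nat.factorial D := by
  classical
  have hT : Finset.Nat.antidiagonalTuple s D
      = Finset.piAntidiag (Finset.univ : Finset (Fin s)) D := by
    ext d
    simp [Finset.Nat.mem_antidiagonalTuple, Finset.mem_piAntidiag]
  rw [hT]
  have hsx : (s : ℝ) * x = ∑ _i : Fin s, x := by
    simp [mul_comm]
  rw [hsx, Finset.sum_pow_eq_sum_piAntidiag (Finset.univ : Finset (Fin s)) (fun _ => x) D,
    Finset.sum_div]
  refine Finset.sum_congr rfl fun d hd => ?_
  rw [Finset.mem_piAntidiag] at hd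
  have hsum : ∑ i, d i = D := hd.1
  have hspec := Nat.multinomial_spec (Finset.univ : Finset (Fin s)) d
  rw [hsum] at hspec
  have hDf : (Nat.factorial D : ℝ)
      = (∏ i, (Nat.factorial (d i) : ℝ)) * (Nat.multinomial Finset.univ d : ℝ) := by
    exact_mod_cast hspec.symm
  have hpx : ∏ i, x ^ d i = x ^ D := by
    rw [Finset.prod_pow_eq_pow_sum, hsum]
  rw [Finset.prod_div_distrib, hpx, hDf]
  have hm : (0:ℝ) < (Nat.multinomial Finset.univ d : ℝ) := by
    exact_mod_cast Nat.multinomial_pos _ _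
  have hprod : (0:ℝ) < ∏ i, (Nat.factorial (d i) : ℝ) := by
    apply Finset.prod_pos
    intro i _
    positivity
  field_simp

/-- if `Y_1,…,Y_s` are i.i.d. with the mixed truncated-Poisson/binomial law,
then `P(Y_1 + ⋯ + Y_s = D) ≤ e^{(1-p)zs} (pzs)^D / (f_{k+1}(z)^s D!)`. -/
theorem stmt6 (k s : ℕ) (hs : 0 < s) (z p : ℝ) (hz : 0 < z) (hp : 0 < p) (hp1 : p < 1)
    (D : ℕ) :
    (∑' d : Fin s → ℕ, if ∑ i, d i = D then ∏ i, mixedBin k z p (d i) else 0) ≤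
      Real.exp ((1 - p) * z * s) * (p * z * s) ^ D /
        (ftail (k + 1) z ^ s * Nat.factorial D) := by
  classical
  have hFpos : 0 < ftail (k + 1) z := ftail_pos _ hz
  set F := ftail (k + 1) z with hF
  set T := Finset.Nat.antidiagonalTuple s D with hT
  have h0 : (∑' d : Fin s → ℕ, if ∑ i, d i = D then ∏ i, mixedBin k z p (d i) else 0)
      = ∑ d ∈ T, ∏ i, mixedBin k z p (d i) := by
    rw [tsum_eq_sum (s := T) ?_]
    · exact Finset.sum_congr rfl fun d hd => if_pos (Finset.Nat.mem_antidiagonalTuple.mp hd)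
    · intro d hd
      exact if_neg fun h => hd (Finset.Nat.mem_antidiagonalTuple.mpr h)
  rw [h0]
  have hstep : ∑ d ∈ T, ∏ i, mixedBin k z p (d i)
      ≤ ∑ d ∈ T, ∏ i, Real.exp ((1 - p) * z) * (p * z) ^ (d i) / (F * Nat.factorial (d i)) := by
    refine Finset.sum_le_sum fun d _ => Finset.prod_le_prod ?_ ?_
    · exact fun i _ => mixedBin_nonneg k hz hp hp1 (d i)
    · exact fun i _ => mixedBin_le k hz hp hp1 (d i)
  refine hstep.trans ?_
  have hprod : ∀ d ∈ T, ∏ i, Real.exp ((1 - p) * z) * (p * z) ^ (d i) / (F * Nat.factorial (d i))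
      = Real.exp ((1 - p) * z) ^ s / F ^ s * ∏ i, (p * z) ^ (d i) / (Nat.factorial (d i)) := by
    intro d _
    rw [Finset.prod_div_distrib, Finset.prod_mul_distrib, Finset.prod_const,
      Finset.prod_mul_distrib, Finset.prod_const, Finset.prod_div_distrib]
    simp only [Finset.card_univ, Fintype.card_fin]
    field_simp
  rw [Finset.sum_congr rfl hprod, ← Finset.mul_sum, hT, multi_sum s D (p * z)]
  apply le_of_eq
  have hexp : Real.exp ((1 - p) * z * s) = Real.exp ((1 - p) * z) ^ s := by
    rw [show (1 - p) * z * (s : ℝ) = (s : ℝ) * ((1 - p) * z) by ring, Real.exp_nat_mul]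
  rw [hexp]
  have hF0 : F ≠ 0 := ne_of_gt hFpos
  have hD0 : (Nat.factorial D : ℝ) ≠ 0 := by positivity
  field_simp
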